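/- Let G be a monoid acting on a set X and let φ be a special filter on X with ⋂φ = {x_0}. Then the topological space (X, τ_φ), where τ_φ consists of all sets U⊆X such that for every g∈G with g•x_0∈U the preimage {x∈X : g•x∈U} belongs to φ, is normal: it is T1 and any two disjoint τ_φ-closed sets have disjoint τ_φ-open neighborhoods. -/

import Mathlib

open Topology Cardinal

universe u

/-- An injective transfinite sequence `(x_α)_{α<κ}` of points of a `G`-act `X` is *special*
(with least index `i₀`) if there is an enumeration `G = {g_α}_{α<κ}` of the monoid `G` such
that for all `α < κ` and all `β, γ, δ < α`:
(1) if `g_β • x_{i₀} ≠ g_γ • x_{i₀}` then `g_β • x_α ≠ g_γ • x_α`, and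
(2) if `g_β • x_{i₀} ≠ g_γ • x_δ` then `g_β • x_α ≠ g_γ • x_δ`. -/
def IsSpecialSeq (G : Type u) {X : Type u} [Monoid G] [MulAction G X] (κ : Cardinal.{u})
    (x : κ.ord.ToType → X) (i₀ : κ.ord.ToType) : Prop :=
  (∀ i, i₀ ≤ i) ∧ Function.Injective x ∧
  ∃ g : κ.ord.ToType → G, Function.Surjective g ∧
    ∀ α β γ δ : κ.ord.ToType, β < α → γ < α → δ < α →
      (g β • x i₀ ≠ g γ • x i₀ → g β • x α ≠ g γ • x α) ∧
      (g β • x i₀ ≠ g γ • x δ → g β • x α ≠ g γ • x δ)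

/-- A filter `φ` on a `G`-act `X` is *special* (with `⋂ φ = {x₀}`) if for some cardinal `κ`
there is a special sequence `(x_α)_{α<κ}` in `X` with first term `x₀` such that
`⋂ φ = {x₀}` and `{x₀} ∪ {x_β : α < β < κ} ∈ φ` for all `α < κ`. -/
def IsSpecialFilter (G : Type u) {X : Type u} [Monoid G] [MulAction G X]
    (φ : Filter X) (x₀ : X) : Prop :=
  ∃ (κ : Cardinal.{u}) (x : κ.ord.ToType → X) (i₀ : κ.ord.ToType),
    IsSpecialSeq G κ x i₀ ∧ x i₀ = x₀ ∧ ⋂₀ φ.sets = {x₀} ∧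
    ∀ α : κ.ord.ToType, insert x₀ (x '' Set.Ioi α) ∈ φ

/-- The topology `τ_φ`. -/
def tauPhi (G X : Type*) [Monoid G] [MulAction G X] (x₀ : X) (φ : Filter X) :
    TopologicalSpace X where
  IsOpen U := ∀ g : G, g • x₀ ∈ U → {x : X | g • x ∈ U} ∈ φ
  isOpen_univ := fun _ _ => Filter.univ_mem' fun _ => trivial
  isOpen_inter := fun U V hU hV g hg =>
    Filter.inter_mem (hU g hg.1) (hV g hg.2)
  isOpen_sUnion := fun S hS g hg => by
    obtain ⟨t, htS, hgt⟩ := hg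
    exact Filter.mem_of_superset (hS t htS g hgt) fun x hx => ⟨t, htS, hx⟩

section Aux

variable {G X : Type u} [Monoid G] [MulAction G X]

/-- Indices `γ` whose point `g γ • x₀` must be put into the saturation of `B` (avoiding `A`). -/
inductive SpecS {κ : Cardinal.{u}} (x : κ.ord.ToType → X) (g : κ.ord.ToType → G)
    (x₀ : X) (A B : Set X) : κ.ord.ToType → Prop
  | base (γ : κ.ord.ToType) : g γ • x₀ ∈ B → SpecS x g x₀ A B γ
  | step (γ γ' β' : κ.ord.ToType) : SpecS x g x₀ A B γ' → γ' < β' →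
      g γ • x₀ = g γ' • x β' → g γ • x₀ ∉ A → SpecS x g x₀ A B γ

/-- The saturation of `B`. -/
def VSet {κ : Cardinal.{u}} (x : κ.ord.ToType → X) (g : κ.ord.ToType → G)
    (x₀ : X) (A B : Set X) : Set X :=
  B ∪ {y | ∃ γ β, SpecS x g x₀ A B γ ∧ γ < β ∧ g γ • x β = y ∧ y ∉ A}

lemma smul_x0_mem_VSet {κ : Cardinal.{u}} {x : κ.ord.ToType → X} {g : κ.ord.ToType → G}
    {x₀ : X} {A B : Set X} {γ : κ.ord.ToType} (h : SpecS x g x₀ A B γ) :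
    g γ • x₀ ∈ VSet x g x₀ A B := by
  cases h with
  | base γ hB => exact Or.inl hB
  | step γ γ' β' hγ' hlt heq hA =>
      exact Or.inr ⟨γ', β', hγ', hlt, heq.symm, hA⟩

lemma key_specS {κ : Cardinal.{u}} {x : κ.ord.ToType → X} {g : κ.ord.ToType → G}
    {i₀ : κ.ord.ToType} {x₀ : X} {A B : Set X}
    (hx₀ : x i₀ = x₀)
    (hcond : ∀ α β γ δ : κ.ord.ToType, β < α → γ < α → δ < α →
      (g β • x i₀ ≠ g γ • x i₀ → g β • x α ≠ g γ • x α) ∧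
      (g β • x i₀ ≠ g γ • x δ → g β • x α ≠ g γ • x δ))
    {γ : κ.ord.ToType} (hγ : SpecS x g x₀ A B γ) :
    ∀ β', γ < β' → g γ • x β' ∉ A →
    ∀ η β, η < β → g η • x β ∉ B → g η • x₀ ∉ VSet x g x₀ A B →
      g η • x β ≠ g γ • x β' := by
  induction hγ with
  | base γ hBm =>
      intro β' hγβ' hA' η β hηβ hnB hnV heq
      rcases lt_trichotomy β' β with hlt | hE | hgt
      · refine (hcond β η γ β' hηβ (hγβ'.trans hlt) hlt).2 ?_ heq
        rw [hx₀]
        intro h'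
        exact hnV (by rw [h']; exact Or.inr ⟨γ, β', SpecS.base γ hBm, hγβ', rfl, hA'⟩)
      · subst hE
        refine (hcond β' η γ η hηβ hγβ' hηβ).1 ?_ heq
        rw [hx₀]
        intro h'
        exact hnV (by rw [h']; exact Or.inl hBm)
      · refine (hcond β' γ η β hγβ' (hηβ.trans hgt) hgt).2 ?_ heq.symm
        rw [hx₀]
        intro h'
        exact hnB (by rw [← h']; exact hBm)
  | step γ γ' β'' hγ'S hlt heq0 hA0 IH =>
      intro β' hγβ' hA' η β hηβ hnB hnV heq
      have hγS : SpecS x g x₀ A B γ := SpecS.step γ γ' β'' hγ'S hlt heq0 hA0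
      have hmemV : g γ • x₀ ∈ VSet x g x₀ A B := smul_x0_mem_VSet hγS
      rcases lt_trichotomy β' β with hlt2 | hE | hgt
      · refine (hcond β η γ β' hηβ (hγβ'.trans hlt2) hlt2).2 ?_ heq
        rw [hx₀]
        intro h'
        exact hnV (by rw [h']; exact Or.inr ⟨γ, β', hγS, hγβ', rfl, hA'⟩)
      · subst hE
        refine (hcond β' η γ η hηβ hγβ' hηβ).1 ?_ heq
        rw [hx₀]
        intro h'
        exact hnV (by rw [h']; exact hmemV)
      · refine (hcond β' γ η β hγβ' (hηβ.trans hgt) hgt).2 ?_ heq.symm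
        rw [hx₀]
        intro h'
        have h'' : g η • x β = g γ' • x β'' := by rw [← h', heq0]
        exact IH β'' hlt (by rw [← heq0]; exact hA0) η β hηβ hnB hnV h''

end Aux

/-- If `φ` is a special filter on a `G`-act `X` with `⋂ φ = {x₀}`, then the topological
space `(X, τ_φ)` is normal: it is `T₁` and any two disjoint closed sets have disjoint open
neighborhoods. -/
theorem tauPhi_normal_of_specialFilter {G X : Type u} [Monoid G] [MulAction G X]
    (φ : Filter X) (x₀ : X) (hφ : IsSpecialFilter G φ x₀) :
    (∀ y : X, IsClosed[tauPhi G X x₀ φ] {y}) ∧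
    (∀ A B : Set X, IsClosed[tauPhi G X x₀ φ] A → IsClosed[tauPhi G X x₀ φ] B →
      Disjoint A B → ∃ U V : Set X, IsOpen[tauPhi G X x₀ φ] U ∧ IsOpen[tauPhi G X x₀ φ] V ∧
        A ⊆ U ∧ B ⊆ V ∧ Disjoint U V) := by
  obtain ⟨κ, x, i₀, ⟨hle, hinj, g, hsurj, hcond⟩, hx₀, hInt, hF⟩ := hφ
  constructor
  · -- T1
    intro y
    have hopen : IsOpen[tauPhi G X x₀ φ] ({y}ᶜ) := by
      show ∀ h : G, h • x₀ ∈ ({y}ᶜ : Set X) → {z : X | h • z ∈ ({y}ᶜ : Set X)} ∈ φ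
      intro h hmem
      obtain ⟨η, rfl⟩ := hsurj h
      have hne : g η • x₀ ≠ y := hmem
      by_cases hex : ∃ β, g η • x β = y
      · obtain ⟨β₀, hβ₀⟩ := hex
        refine Filter.mem_of_superset (hF (max η β₀)) ?_
        intro z hz
        simp only [Set.mem_insert_iff, Set.mem_image, Set.mem_Ioi] at hz
        obtain rfl | ⟨β, hβ, rfl⟩ := hz
        · exact hne
        · have h1 : η < β := (le_max_left η β₀).trans_lt hβ
          have h2 : β₀ < β := (le_max_right η β₀).trans_lt hβ
          have := (hcond β η η β₀ h1 h1 h2).2 (by rw [hx₀, hβ₀]; exact hne)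
          show g η • x β ≠ y
          rw [← hβ₀]
          exact this
      · refine Filter.mem_of_superset (hF i₀) ?_
        intro z hz
        simp only [Set.mem_insert_iff, Set.mem_image, Set.mem_Ioi] at hz
        obtain rfl | ⟨β, hβ, rfl⟩ := hz
        · exact hne
        · exact fun h' => hex ⟨β, h'⟩
    exact (@isOpen_compl_iff X {y} (tauPhi G X x₀ φ)).mp hopen
  · -- normality
    intro A B hA hB hAB
    have hAopen : ∀ h : G, h • x₀ ∈ Aᶜ → {z : X | h • z ∈ (Aᶜ : Set X)} ∈ φ :=
      hA.isOpen_compl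
    have hBopen : ∀ h : G, h • x₀ ∈ Bᶜ → {z : X | h • z ∈ (Bᶜ : Set X)} ∈ φ :=
      hB.isOpen_compl
    have hVA : ∀ y ∈ VSet x g x₀ A B, y ∉ A := by
      rintro y (hy | ⟨γ, β, hS, hγβ, rfl, hA'⟩)
      · exact fun hyA => Set.disjoint_left.mp hAB hyA hy
      · exact hA'
    refine ⟨(VSet x g x₀ A B)ᶜ, VSet x g x₀ A B, ?_, ?_,
      fun a ha hv => hVA a hv ha, fun b hb => Or.inl hb, disjoint_compl_left⟩
    · -- Vᶜ is open
      show ∀ h : G, h • x₀ ∈ (VSet x g x₀ A B)ᶜ →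
        {z : X | h • z ∈ (VSet x g x₀ A B)ᶜ} ∈ φ
      intro h hmem
      obtain ⟨η, rfl⟩ := hsurj h
      have hTB : {z : X | g η • z ∈ (Bᶜ : Set X)} ∈ φ :=
        hBopen _ (fun hb => hmem (Or.inl hb))
      refine Filter.mem_of_superset (Filter.inter_mem (hF η) hTB) ?_
      intro z hz
      simp only [Set.mem_inter_iff, Set.mem_insert_iff, Set.mem_image, Set.mem_Ioi] at hz
      obtain ⟨rfl | ⟨β, hβ, rfl⟩, hz2⟩ := hz
      · exact hmem
      · rintro (hb | ⟨γ, β', hS, hγβ', heq, hA'⟩)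
        · exact hz2 hb
        · exact key_specS hx₀ hcond hS β' hγβ' (by rw [heq]; exact hA') η β hβ hz2 hmem
            heq.symm
    · -- V is open
      show ∀ h : G, h • x₀ ∈ VSet x g x₀ A B → {z : X | h • z ∈ VSet x g x₀ A B} ∈ φ
      intro h hmem
      obtain ⟨η, rfl⟩ := hsurj h
      have hηS : SpecS x g x₀ A B η := by
        rcases hmem with hb | ⟨γ, β, hS, hγβ, heq, hA'⟩
        · exact SpecS.base η hb
        · exact SpecS.step η γ β hS hγβ heq.symm (by rw [← heq] at hA' ⊢; exact hA')
      have hTA : {z : X | g η • z ∈ (Aᶜ : Set X)} ∈ φ := hAopen _ (hVA _ hmem)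
      refine Filter.mem_of_superset (Filter.inter_mem (hF η) hTA) ?_
      intro z hz
      simp only [Set.mem_inter_iff, Set.mem_insert_iff, Set.mem_image, Set.mem_Ioi] at hz
      obtain ⟨rfl | ⟨β, hβ, rfl⟩, hz2⟩ := hz
      · exact hmem
      · exact Or.inr ⟨η, β, hηS, hβ, rfl, hz2⟩
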